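/- Single-step potential bound in the sample-size analysis: let l ∈ [0,1], ε ∈ (0,1), c := 8 log d/ε² (with d ≥ 2 so c ≥ 4), and p := c·l ≤ 1. Then p·(1 + l/4)·(1 + 1/((1+ε)c))⁻¹ + (1 − p)·(1 + l/4) ≤ (1 + l/4)(1 − l/4) ≤ 1. -/

import Mathlib

/-- Single-step potential bound in the sample-size analysis: for `l ∈ [0,1]`,
`ε ∈ (0,1)`, `c ≥ 4` and `p = c·l ≤ 1`,
`p(1 + l/4)(1 + 1/((1+ε)c))⁻¹ + (1 − p)(1 + l/4) ≤ (1 + l/4)(1 − l/4) ≤ 1`. -/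
theorem single_step_potential_bound (l ε c p : ℝ)
    (hl0 : 0 ≤ l) (hl1 : l ≤ 1) (hε0 : 0 < ε) (hε1 : ε < 1)
    (hc : 4 ≤ c) (hp : p = c * l) (hp1 : p ≤ 1) :
    p * (1 + l / 4) * (1 + 1 / ((1 + ε) * c))⁻¹ + (1 - p) * (1 + l / 4) ≤
        (1 + l / 4) * (1 - l / 4) ∧
      (1 + l / 4) * (1 - l / 4) ≤ 1 := by
  have hd : (0:ℝ) < (1 + ε) * c := by nlinarith
  have ht : (0:ℝ) < (1 + ε) * c + 1 := by linarith
  have hA : (1 + 1 / ((1 + ε) * c))⁻¹ = 1 - 1 / ((1 + ε) * c + 1) := by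
    field_simp
    ring
  refine ⟨?_, by nlinarith⟩
  rw [hA, hp]
  have key : l / 4 ≤ c * l / ((1 + ε) * c + 1) := by
    rw [div_le_div_iff₀ (by norm_num) ht]
    have h : 0 ≤ l * (4 * c - ((1 + ε) * c + 1)) :=
      mul_nonneg hl0 (by nlinarith)
    nlinarith
  have h1 : c * l * (1 + l / 4) * (1 - 1 / ((1 + ε) * c + 1)) +
      (1 - c * l) * (1 + l / 4) = (1 + l / 4) * (1 - c * l / ((1 + ε) * c + 1)) := by
    field_simp
    ring
  rw [h1]
  have hpos : (0:ℝ) ≤ 1 + l / 4 := by linarith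
  have : 1 - c * l / ((1 + ε) * c + 1) ≤ 1 - l / 4 := by linarith
  exact mul_le_mul_of_nonneg_left this hpos
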